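/- Let a ∈ ℝⁿ with a ≥ 0, let B be an entrywise nonnegative n×n×n tensor, define F(x) = a + Bx² − x and R_x = I − Bx: − B:x, and let m be the minimal nonnegative solution of x = a + Bx². Let x_k and y_k satisfy 0 ≤ y_k ≤ x_k ≤ m, F(x_k) ≥ 0 and F(y_k) ≥ 0 entrywise. Suppose R_{x_k} and R_{y_k} are invertible with R_{x_k}⁻¹ ≥ 0 and R_{y_k}⁻¹ ≥ 0 entrywise, and that R_{y_k} = M − N is a splitting with N ≥ 0 entrywise and M invertible with M⁻¹ ≥ 0 entrywise. Define the Newton iterate x_{k+1} = x_k + R_{x_k}⁻¹F(x_k) and the block Jacobi iterate y_{k+1} = M⁻¹(N y_k + a − By_k²). Then y_{k+1} ≤ x_{k+1} entrywise; moreover F(x_{k+1}) ≥ 0 and F(y_{k+1}) ≥ 0 entrywise. -/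
import Mathlib


open Matrix

/-- `(tapp B x y) i = Σ_{j,k} B i j k * x j * y k`, the tensor–vector–vector product. -/
def tapp {n : ℕ} (B : Fin n → Fin n → Fin n → ℝ) (x y : Fin n → ℝ) : Fin n → ℝ :=
  fun i => ∑ j, ∑ k, B i j k * x j * y k

/-- The matrix `Bx:`, satisfying `(Bx:) h = B x h`; `(Bx:)_{ij} = Σ_k b_{ikj} x_k`. -/
def matL {n : ℕ} (B : Fin n → Fin n → Fin n → ℝ) (x : Fin n → ℝ) :
    Matrix (Fin n) (Fin n) ℝ :=
  Matrix.of fun i j => ∑ k, B i k j * x k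

/-- The matrix `B:x`, satisfying `(B:x) h = B h x`; `(B:x)_{ij} = Σ_k b_{ijk} x_k`. -/
def matR {n : ℕ} (B : Fin n → Fin n → Fin n → ℝ) (x : Fin n → ℝ) :
    Matrix (Fin n) (Fin n) ℝ :=
  Matrix.of fun i j => ∑ k, B i j k * x k

/-- `R_x = I − Bx: − B:x`, the negative Jacobian of `x ↦ a + Bx² − x`. -/
def Rmat {n : ℕ} (B : Fin n → Fin n → Fin n → ℝ) (x : Fin n → ℝ) :
    Matrix (Fin n) (Fin n) ℝ :=
  1 - matL B x - matR B x

lemma tapp_add_left {n : ℕ} (B : Fin n → Fin n → Fin n → ℝ) (u v w : Fin n → ℝ) :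
    tapp B (u + v) w = tapp B u w + tapp B v w := by
  funext i
  simp [tapp, add_mul, mul_add, Finset.sum_add_distrib]

lemma tapp_sub_left {n : ℕ} (B : Fin n → Fin n → Fin n → ℝ) (u v w : Fin n → ℝ) :
    tapp B (u - v) w = tapp B u w - tapp B v w := by
  funext i
  simp [tapp, sub_mul, mul_sub, Finset.sum_sub_distrib]

lemma tapp_add_right {n : ℕ} (B : Fin n → Fin n → Fin n → ℝ) (u v w : Fin n → ℝ) :
    tapp B u (v + w) = tapp B u v + tapp B u w := by
  funext i
  simp [tapp, mul_add, Finset.sum_add_distrib]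

lemma tapp_sub_right {n : ℕ} (B : Fin n → Fin n → Fin n → ℝ) (u v w : Fin n → ℝ) :
    tapp B u (v - w) = tapp B u v - tapp B u w := by
  funext i
  simp [tapp, mul_sub, Finset.sum_sub_distrib]

lemma tapp_nonneg {n : ℕ} {B : Fin n → Fin n → Fin n → ℝ} {u v : Fin n → ℝ}
    (hB : ∀ i j k, 0 ≤ B i j k) (hu : ∀ i, 0 ≤ u i) (hv : ∀ i, 0 ≤ v i) :
    ∀ i, 0 ≤ tapp B u v i := by
  intro i
  apply Finset.sum_nonneg; intro j _
  apply Finset.sum_nonneg; intro k _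
  exact mul_nonneg (mul_nonneg (hB i j k) (hu j)) (hv k)

lemma mulVec_nonneg {n : ℕ} {A : Matrix (Fin n) (Fin n) ℝ} {v : Fin n → ℝ}
    (hA : ∀ i j, 0 ≤ A i j) (hv : ∀ i, 0 ≤ v i) : ∀ i, 0 ≤ (A *ᵥ v) i := by
  intro i
  simp only [mulVec, dotProduct]
  apply Finset.sum_nonneg; intro j _
  exact mul_nonneg (hA i j) (hv j)

lemma Rmat_mulVec {n : ℕ} (B : Fin n → Fin n → Fin n → ℝ) (v h : Fin n → ℝ) :
    Rmat B v *ᵥ h = h - tapp B v h - tapp B h v := by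
  funext i
  simp only [Rmat, sub_mulVec, one_mulVec, Pi.sub_apply]
  congr 1
  · congr 1
    simp only [matL, mulVec, dotProduct, of_apply, tapp, Finset.sum_mul]
    rw [Finset.sum_comm]
  · simp only [matR, mulVec, dotProduct, of_apply, tapp, Finset.sum_mul]
    apply Finset.sum_congr rfl; intro j _
    apply Finset.sum_congr rfl; intro k _
    ring

lemma mul_entries_nonneg {n : ℕ} {A C : Matrix (Fin n) (Fin n) ℝ}
    (hA : ∀ i j, 0 ≤ A i j) (hC : ∀ i j, 0 ≤ C i j) : ∀ i j, 0 ≤ (A * C) i j := by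
  intro i j
  rw [Matrix.mul_apply]
  exact Finset.sum_nonneg fun k _ => mul_nonneg (hA i k) (hC k j)

/-- Comparison of one Newton step and one block-Jacobi step
(Theorem `thmcompareBJN` in the paper): if `y_k ≤ x_k` then `y_{k+1} ≤ x_{k+1}`,
and both residuals stay nonnegative. -/
theorem newton_vs_block_jacobi_step
    {n : ℕ} (a : Fin n → ℝ) (B : Fin n → Fin n → Fin n → ℝ)
    (ha : ∀ i, 0 ≤ a i) (hB : ∀ i j k, 0 ≤ B i j k)
    (m : Fin n → ℝ)
    (hm0 : ∀ i, 0 ≤ m i)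
    (hmsol : m = a + tapp B m m)
    (hmin : ∀ x : Fin n → ℝ, (∀ i, 0 ≤ x i) → x = a + tapp B x x → ∀ i, m i ≤ x i)
    (xk yk : Fin n → ℝ)
    (hyk0 : ∀ i, 0 ≤ yk i) (hykxk : ∀ i, yk i ≤ xk i) (hxkm : ∀ i, xk i ≤ m i)
    (hFx : ∀ i, 0 ≤ (a + tapp B xk xk - xk) i)
    (hFy : ∀ i, 0 ≤ (a + tapp B yk yk - yk) i)
    (hRxdet : IsUnit (Rmat B xk).det) (hRxinv : ∀ i j, 0 ≤ (Rmat B xk)⁻¹ i j)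
    (hRydet : IsUnit (Rmat B yk).det) (hRyinv : ∀ i j, 0 ≤ (Rmat B yk)⁻¹ i j)
    (M N : Matrix (Fin n) (Fin n) ℝ)
    (hsplit : Rmat B yk = M - N)
    (hN : ∀ i j, 0 ≤ N i j)
    (hMdet : IsUnit M.det) (hMinv : ∀ i j, 0 ≤ M⁻¹ i j)
    (xk1 yk1 : Fin n → ℝ)
    (hxk1 : xk1 = xk + (Rmat B xk)⁻¹ *ᵥ (a + tapp B xk xk - xk))
    (hyk1 : yk1 = M⁻¹ *ᵥ (N *ᵥ yk + a - tapp B yk yk)) :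
    (∀ i, yk1 i ≤ xk1 i) ∧
    (∀ i, 0 ≤ (a + tapp B xk1 xk1 - xk1) i) ∧
    (∀ i, 0 ≤ (a + tapp B yk1 yk1 - yk1) i) := by
  set d := (Rmat B xk)⁻¹ *ᵥ (a + tapp B xk xk - xk) with hddef
  set e := M⁻¹ *ᵥ (a + tapp B yk yk - yk) with hedef
  set g := (Rmat B yk)⁻¹ *ᵥ (a + tapp B yk yk - yk) with hgdef
  have hd0 : ∀ i, 0 ≤ d i := mulVec_nonneg hRxinv hFx
  have he0 : ∀ i, 0 ≤ e i := mulVec_nonneg hMinv hFy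
  have hg0 : ∀ i, 0 ≤ g i := mulVec_nonneg hRyinv hFy
  -- basic mulVec cancellation facts
  have hRxd : Rmat B xk *ᵥ d = a + tapp B xk xk - xk := by
    rw [hddef, Matrix.mulVec_mulVec, Matrix.mul_nonsing_inv _ hRxdet, Matrix.one_mulVec]
  have hRyg : Rmat B yk *ᵥ g = a + tapp B yk yk - yk := by
    rw [hgdef, Matrix.mulVec_mulVec, Matrix.mul_nonsing_inv _ hRydet, Matrix.one_mulVec]
  have hMe : M *ᵥ e = a + tapp B yk yk - yk := by
    rw [hedef, Matrix.mulVec_mulVec, Matrix.mul_nonsing_inv _ hMdet, Matrix.one_mulVec]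
  -- scalar versions
  have hRx' : ∀ i, d i - tapp B xk d i - tapp B d xk i
      = a i + tapp B xk xk i - xk i := by
    intro i
    have h := congrFun hRxd i
    rw [Rmat_mulVec] at h
    simpa using h
  have hRy' : ∀ i, g i - tapp B yk g i - tapp B g yk i
      = a i + tapp B yk yk i - yk i := by
    intro i
    have h := congrFun hRyg i
    rw [Rmat_mulVec] at h
    simpa using h
  -- yk1 = yk + e
  have hM : M = Rmat B yk + N := by rw [hsplit, sub_add_cancel]
  have hkey : N *ᵥ yk + a - tapp B yk yk = M *ᵥ (yk + e) := by
    funext i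
    have h1 := congrFun hMe i
    have h2 : (M *ᵥ yk) i = (Rmat B yk *ᵥ yk) i + (N *ᵥ yk) i := by
      rw [hM, Matrix.add_mulVec]; simp
    rw [Rmat_mulVec] at h2
    have h3 : (M *ᵥ (yk + e)) i = (M *ᵥ yk) i + (M *ᵥ e) i := by
      rw [Matrix.mulVec_add]; simp
    simp only [Pi.add_apply, Pi.sub_apply] at *
    linarith
  have hyke : yk1 = yk + e := by
    rw [hyk1, hkey, Matrix.mulVec_mulVec, Matrix.nonsing_inv_mul _ hMdet,
      Matrix.one_mulVec]
  -- scalar version of M *ᵥ e = Fy, decomposed through the splitting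
  have hMe' : ∀ i, e i - tapp B yk e i - tapp B e yk i
      = a i + tapp B yk yk i - yk i - (N *ᵥ e) i := by
    intro i
    have h1 := congrFun hMe i
    have h2 : (M *ᵥ e) i = (Rmat B yk *ᵥ e) i + (N *ᵥ e) i := by
      rw [hM, Matrix.add_mulVec]; simp
    rw [Rmat_mulVec] at h2
    simp only [Pi.add_apply, Pi.sub_apply] at *
    linarith
  -- residual of Newton iterate
  have hFx1 : ∀ i, 0 ≤ (a + tapp B xk1 xk1 - xk1) i := by
    intro i
    have h := hRx' i
    have hexp : (a + tapp B xk1 xk1 - xk1) i = tapp B d d i := by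
      rw [hxk1]
      simp only [tapp_add_left, tapp_add_right, Pi.add_apply, Pi.sub_apply]
      linarith
    rw [hexp]
    exact tapp_nonneg hB hd0 hd0 i
  -- residual of Jacobi iterate
  have hFy1 : ∀ i, 0 ≤ (a + tapp B yk1 yk1 - yk1) i := by
    intro i
    have h := hMe' i
    have hexp : (a + tapp B yk1 yk1 - yk1) i = (N *ᵥ e) i + tapp B e e i := by
      rw [hyke]
      simp only [tapp_add_left, tapp_add_right, Pi.add_apply, Pi.sub_apply]
      linarith
    rw [hexp]
    exact add_nonneg (mulVec_nonneg hN he0 i) (tapp_nonneg hB he0 he0 i)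
  -- e ≤ g
  have hNid : N = M - Rmat B yk := by rw [hsplit]; abel
  have hmat : (Rmat B yk)⁻¹ - M⁻¹ = (Rmat B yk)⁻¹ * N * M⁻¹ := by
    rw [hNid, mul_sub, sub_mul, mul_assoc, Matrix.mul_nonsing_inv _ hMdet, mul_one,
      Matrix.nonsing_inv_mul _ hRydet, one_mul]
  have hdiffnn : ∀ i j, 0 ≤ ((Rmat B yk)⁻¹ - M⁻¹) i j := by
    rw [hmat]
    exact mul_entries_nonneg (mul_entries_nonneg hRyinv hN) hMinv
  have heg : ∀ i, e i ≤ g i := by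
    intro i
    have h := mulVec_nonneg hdiffnn hFy i
    rw [Matrix.sub_mulVec] at h
    simp only [Pi.sub_apply] at h
    rw [← hedef, ← hgdef] at h
    linarith
  -- yk + g ≤ xk1
  have hw0 : ∀ i, 0 ≤ (tapp B (xk - yk) (xk + d - yk) + tapp B d (xk - yk)) i := by
    intro i
    have h1 : ∀ j, 0 ≤ (xk - yk) j := fun j => sub_nonneg.mpr (hykxk j)
    have h2 : ∀ j, 0 ≤ (xk + d - yk) j := by
      intro j
      simp only [Pi.add_apply, Pi.sub_apply]
      have := hykxk j; have := hd0 j; linarith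
    exact add_nonneg (tapp_nonneg hB h1 h2 i) (tapp_nonneg hB hd0 h1 i)
  have hw : Rmat B yk *ᵥ (xk + d - (yk + g))
      = tapp B (xk - yk) (xk + d - yk) + tapp B d (xk - yk) := by
    rw [Rmat_mulVec]
    funext i
    have h1 := hRx' i
    have h2 := hRy' i
    simp only [tapp_add_left, tapp_add_right, tapp_sub_left, tapp_sub_right,
      Pi.add_apply, Pi.sub_apply]
    linarith
  have hzx : ∀ i, yk i + g i ≤ xk1 i := by
    intro i
    have hv : xk + d - (yk + g)
        = (Rmat B yk)⁻¹ *ᵥ (tapp B (xk - yk) (xk + d - yk) + tapp B d (xk - yk)) := by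
      rw [← hw, Matrix.mulVec_mulVec, Matrix.nonsing_inv_mul _ hRydet, Matrix.one_mulVec]
    have h := mulVec_nonneg hRyinv hw0 i
    rw [← hv] at h
    simp only [Pi.add_apply, Pi.sub_apply] at h
    rw [hxk1]
    simp only [Pi.add_apply]
    linarith
  refine ⟨fun i => ?_, hFx1, hFy1⟩
  have := heg i
  have := hzx i
  rw [hyke]
  simp only [Pi.add_apply]
  linarith
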